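/- arXiv:math/0204028 — 6 statements merged into one kernel-verified Lean document; each statement's English description precedes it below -/
import Mathlib

section
/- Let α_e ∈ ℝ and let p̂_e = β⁻¹({(α_e k, 0)}) ⊆ P̂. Suppose p̂_e is stable for the blown-up dynamics, in the sense that for every open neighborhood Û of p̂_e in P̂ there exists an open neighborhood V̂ of p̂_e in P̂ such that every solution t ↦ (w(t),ẇ(t)) of (8) (with its fixed parameters a ≥ 0, γ ∈ ℝ) whose initial point satisfies (w(0),ẇ(0),a,γ) ∈ V̂ has (w(t),ẇ(t),a,γ) ∈ Û for all t ≥ 0. Then (α_e k, 0) is a Lyapunov stable equilibrium of (60): for every neighborhood U of (α_e k, 0) in ℝ³×ℝ³ there is a neighborhood V of (α_e k, 0) such that every solution of (60) starting in V remains in U for all t ≥ 0. -/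
noncomputable section

open scoped RealInnerProductSpace

/-- ℝ³ with the standard (Euclidean) inner product and norm. -/
abbrev E3 : Type := EuclideanSpace ℝ (Fin 3)

/-- Build a vector of `E3` from its three coordinates. -/
def vec3 (x y z : ℝ) : E3 := (WithLp.equiv 2 (Fin 3 → ℝ)).symm ![x, y, z]

/-- The standard cross product on ℝ³. -/
def cross3 (u v : E3) : E3 :=
  vec3 (u 1 * v 2 - u 2 * v 1) (u 2 * v 0 - u 0 * v 2) (u 0 * v 1 - u 1 * v 0)

/-- The vertical unit vector k = (0,0,1). -/
def kvec : E3 := vec3 0 0 1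

/-- 𝐈⁻¹ u = (u₁/I₁, u₂/I₂, u₃/I₃). -/
def Iinv (I1 I2 I3 : ℝ) (u : E3) : E3 := vec3 (u 0 / I1) (u 1 / I2) (u 2 / I3)

/-- 𝐌⁻¹ u = (u₁/M₁, u₂/M₂, u₃/M₃). -/
def Minv (M1 M2 M3 : ℝ) (u : E3) : E3 := vec3 (u 0 / M1) (u 1 / M2) (u 2 / M3)

/-- `(pm, pv) : ℝ → ℝ³ × ℝ³` is a (global) solution of the underwater-vehicle
Poisson system (60): dπ/dt = π×(𝐈⁻¹π) + p×(𝐌⁻¹p), dp/dt = p×(𝐈⁻¹π). -/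
def IsSol60 (I1 I2 I3 M1 M2 M3 : ℝ) (pm pv : ℝ → E3) : Prop :=
  (∀ t : ℝ, HasDerivAt pm
      (cross3 (pm t) (Iinv I1 I2 I3 (pm t)) + cross3 (pv t) (Minv M1 M2 M3 (pv t))) t) ∧
  (∀ t : ℝ, HasDerivAt pv (cross3 (pv t) (Iinv I1 I2 I3 (pm t))) t)

/-- Solution of (60) on a subset `J ⊆ ℝ`. -/
def IsSol60On (I1 I2 I3 M1 M2 M3 : ℝ) (J : Set ℝ) (pm pv : ℝ → E3) : Prop :=
  (∀ t ∈ J, HasDerivWithinAt pm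
      (cross3 (pm t) (Iinv I1 I2 I3 (pm t)) + cross3 (pv t) (Minv M1 M2 M3 (pv t))) J t) ∧
  (∀ t ∈ J, HasDerivWithinAt pv (cross3 (pv t) (Iinv I1 I2 I3 (pm t))) J t)

/-- The blown-up space P̂ = {(w,ẇ,a,γ) : ‖w‖ = 1, w·ẇ = 0, a ≥ 0} ⊆ ℝ³×ℝ³×ℝ×ℝ. -/
def Phat : Set (E3 × E3 × ℝ × ℝ) :=
  {x | ‖x.1‖ = 1 ∧ ⟪x.1, x.2.1⟫ = 0 ∧ 0 ≤ x.2.2.1}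

/-- The blow-down map β(w,ẇ,a,γ) = (ẇ + γw, aw). -/
def blowdown (x : E3 × E3 × ℝ × ℝ) : E3 × E3 :=
  (x.2.1 + x.2.2.2 • x.1, x.2.2.1 • x.1)

/-- `(w, dw) : ℝ → ℝ³ × ℝ³` is a (global) solution of the blown-up dynamics (8)
with fixed parameters `a`, `γ`:
dw/dt = w×(𝐈⁻¹(ẇ+γw)), dẇ/dt = ẇ×(𝐈⁻¹(ẇ+γw)) + a² w×(𝐌⁻¹w). -/
def IsSol8 (I1 I2 I3 M1 M2 M3 a γ : ℝ) (w dw : ℝ → E3) : Prop :=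
  (∀ t : ℝ, HasDerivAt w (cross3 (w t) (Iinv I1 I2 I3 (dw t + γ • w t))) t) ∧
  (∀ t : ℝ, HasDerivAt dw
      (cross3 (dw t) (Iinv I1 I2 I3 (dw t + γ • w t))
        + a ^ 2 • cross3 (w t) (Minv M1 M2 M3 (w t))) t)

/-- Solution of (8) on a subset `J ⊆ ℝ`. -/
def IsSol8On (I1 I2 I3 M1 M2 M3 a γ : ℝ) (J : Set ℝ) (w dw : ℝ → E3) : Prop :=
  (∀ t ∈ J, HasDerivWithinAt w (cross3 (w t) (Iinv I1 I2 I3 (dw t + γ • w t))) J t) ∧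
  (∀ t ∈ J, HasDerivWithinAt dw
      (cross3 (dw t) (Iinv I1 I2 I3 (dw t + γ • w t))
        + a ^ 2 • cross3 (w t) (Minv M1 M2 M3 (w t))) J t)

lemma vec3_apply (x y z : ℝ) (i : Fin 3) : vec3 x y z i = ![x,y,z] i := rfl

lemma cross3_smul_left (c : ℝ) (u v : E3) : cross3 (c • u) v = c • cross3 u v := by
  ext i; fin_cases i <;> simp [cross3, vec3_apply] <;> ring
lemma cross3_smul_right (c : ℝ) (u v : E3) : cross3 u (c • v) = c • cross3 u v := by
  ext i; fin_cases i <;> simp [cross3, vec3_apply] <;> ring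
lemma cross3_sub_left (u v w : E3) : cross3 (u - v) w = cross3 u w - cross3 v w := by
  ext i; fin_cases i <;> simp [cross3, vec3_apply] <;> ring
lemma cross3_zero_left (v : E3) : cross3 0 v = 0 := by
  ext i; fin_cases i <;> simp [cross3, vec3_apply]
lemma cross3_zero_right (v : E3) : cross3 v 0 = 0 := by
  ext i; fin_cases i <;> simp [cross3, vec3_apply]
lemma Iinv_zero (I1 I2 I3 : ℝ) : Iinv I1 I2 I3 0 = 0 := by
  ext i; fin_cases i <;> simp [Iinv, vec3_apply]
lemma Minv_smul (M1 M2 M3 c : ℝ) (u : E3) :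
    Minv M1 M2 M3 (c • u) = c • Minv M1 M2 M3 u := by
  ext i; fin_cases i <;> simp [Minv, vec3_apply] <;> ring
lemma inner_cross_self (u v : E3) : ⟪u, cross3 u v⟫ = 0 := by
  simp [PiLp.inner_apply, cross3, vec3_apply, Fin.sum_univ_three]; ring
lemma cross_inner_self (u v : E3) : ⟪cross3 u v, u⟫ = 0 := by
  simp [PiLp.inner_apply, cross3, vec3_apply, Fin.sum_univ_three]; ring
lemma triple (u v x : E3) : ⟪u, cross3 v x⟫ + ⟪cross3 u x, v⟫ = 0 := by
  simp [PiLp.inner_apply, cross3, vec3_apply, Fin.sum_univ_three]; ring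
lemma norm_kvec : ‖kvec‖ = 1 := by
  simp [EuclideanSpace.norm_eq, kvec, vec3_apply, Fin.sum_univ_three]

def emap (αe : ℝ) (w : E3) : E3 × E3 × ℝ × ℝ :=
  (w, αe • kvec - (αe * ⟪kvec, w⟫) • w, 0, αe * ⟪kvec, w⟫)

lemma emap_mem_phat_e (αe : ℝ) {w : E3} (hw : ‖w‖ = 1) :
    emap αe w ∈ {x ∈ Phat | blowdown x = (αe • kvec, 0)} := by
  have h1 : ⟪w, w⟫ = 1 := by
    rw [real_inner_self_eq_norm_sq, hw]; norm_num
  constructor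
  · refine ⟨hw, ?_, le_refl 0⟩
    show ⟪w, αe • kvec - (αe * ⟪kvec, w⟫) • w⟫ = 0
    rw [inner_sub_right, real_inner_smul_right, real_inner_smul_right, h1,
      real_inner_comm w kvec]; ring
  · show (_ + _, _) = _
    simp [blowdown, emap]

lemma phat_e_eq_image (αe : ℝ) :
    {x ∈ Phat | blowdown x = (αe • kvec, 0)} = emap αe '' (Metric.sphere 0 1) := by
  ext x
  constructor
  · rintro ⟨⟨hw, hinner, ha⟩, hbd⟩
    obtain ⟨w, dw, a, γ⟩ := x
    refine ⟨w, by simpa using hw, ?_⟩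
    simp only at hw hinner ha
    have h1 : dw + γ • w = αe • kvec := congrArg Prod.fst hbd
    have h2 : a • w = 0 := congrArg Prod.snd hbd
    have hwne : w ≠ 0 := by intro h; rw [h] at hw; simp at hw
    have ha0 : a = 0 := by
      rcases smul_eq_zero.1 h2 with h | h
      · exact h
      · exact absurd h hwne
    have hww : ⟪w, w⟫ = 1 := by rw [real_inner_self_eq_norm_sq, hw]; norm_num
    have hγ : αe * ⟪kvec, w⟫ = γ := by
      have := congrArg (fun v => ⟪w, v⟫) h1
      simp only [inner_add_right, real_inner_smul_right, hww, hinner] at this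
      have hcomm : (inner ℝ w kvec : ℝ) = inner ℝ kvec w := real_inner_comm _ _
      rw [hcomm] at this
      linarith [this]
    have hdw : αe • kvec - γ • w = dw := by rw [← h1]; abel
    simp only [emap, hγ, hdw, ha0]
  · rintro ⟨w, hw, rfl⟩
    exact emap_mem_phat_e αe (by simpa using hw)

lemma emap_continuous (αe : ℝ) : Continuous (emap αe) := by
  have hγc : Continuous fun w : E3 => αe * ⟪kvec, w⟫ :=
    continuous_const.mul (Continuous.inner continuous_const continuous_id)
  exact continuous_id.prodMk
    ((continuous_const.sub (hγc.smul continuous_id)).prodMk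
      (continuous_const.prodMk hγc))

lemma lift_mem_Phat {w0 : E3} (pm0 : E3) {a0 : ℝ} (hw : ‖w0‖ = 1) (ha : 0 ≤ a0) :
    ((w0, pm0 - ⟪pm0, w0⟫ • w0, a0, ⟪pm0, w0⟫) : E3 × E3 × ℝ × ℝ) ∈ Phat := by
  refine ⟨hw, ?_, ha⟩
  have h1 : ⟪w0, w0⟫ = 1 := by rw [real_inner_self_eq_norm_sq, hw]; norm_num
  show ⟪w0, pm0 - ⟪pm0, w0⟫ • w0⟫ = 0
  rw [inner_sub_right, real_inner_smul_right, h1, real_inner_comm]; ring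

lemma lift_dist {αe δ : ℝ} (hδ : 0 < δ) {w0 pm0 : E3} {a0 : ℝ} (hw : ‖w0‖ = 1)
    (hq : ‖pm0 - αe • kvec‖ < δ/3) (ha : 0 ≤ a0) (ha3 : a0 < δ/3) :
    dist ((w0, pm0 - ⟪pm0, w0⟫ • w0, a0, ⟪pm0, w0⟫) : E3 × E3 × ℝ × ℝ)
      (emap αe w0) < δ := by
  set q := pm0 - αe • kvec with hqdef
  have hqw : |⟪q, w0⟫| ≤ ‖q‖ := by
    calc |⟪q, w0⟫| ≤ ‖q‖ * ‖w0‖ := abs_real_inner_le_norm q w0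
    _ = ‖q‖ := by rw [hw, mul_one]
  have hinnq : ⟪q, w0⟫ = ⟪pm0, w0⟫ - αe * ⟪kvec, w0⟫ := by
    rw [hqdef, inner_sub_left, real_inner_smul_left]
  rw [emap, Prod.dist_eq, Prod.dist_eq, Prod.dist_eq]
  apply max_lt
  · rw [dist_self]; exact hδ
  apply max_lt
  · rw [dist_eq_norm]
    have hrw : (pm0 - ⟪pm0, w0⟫ • w0) - (αe • kvec - (αe * ⟪kvec, w0⟫) • w0)
        = q - ⟪q, w0⟫ • w0 := by
      rw [hinnq, sub_smul, hqdef]; abel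
    rw [hrw]
    calc ‖q - ⟪q, w0⟫ • w0‖ ≤ ‖q‖ + ‖⟪q, w0⟫ • w0‖ := norm_sub_le _ _
      _ = ‖q‖ + |⟪q, w0⟫| := by rw [norm_smul, hw, mul_one, Real.norm_eq_abs]
      _ ≤ ‖q‖ + ‖q‖ := by linarith
      _ < δ := by linarith
  apply max_lt
  · rw [Real.dist_eq, sub_zero, abs_of_nonneg ha]; linarith
  · rw [Real.dist_eq]
    have : ⟪pm0, w0⟫ - αe * ⟪kvec, w0⟫ = ⟪q, w0⟫ := hinnq.symm
    rw [this]
    calc |⟪q, w0⟫| ≤ ‖q‖ := hqw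
      _ < δ := by linarith

lemma eq_of_hasDerivAt_zero {f : ℝ → ℝ} (h : ∀ t, HasDerivAt f 0 t) (t : ℝ) :
    f t = f 0 :=
  is_const_of_deriv_eq_zero (fun s => (h s).differentiableAt) (fun s => (h s).deriv) t 0

/-- if the blown-up set p̂_e = β⁻¹({(α_e k, 0)}) is stable for the
blown-up dynamics (8) (neighborhoods taken in the subspace topology of P̂),
then (α_e k, 0) is a Lyapunov stable equilibrium of (60). -/

theorem statement1 (I1 I2 I3 M1 M2 M3 : ℝ)
    (hI1 : 0 < I1) (hI2 : 0 < I2) (hI3 : 0 < I3)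
    (hM1 : 0 < M1) (hM2 : 0 < M2) (hM3 : 0 < M3) (αe : ℝ)
    (phat_e : Set (E3 × E3 × ℝ × ℝ))
    (hphat_e : phat_e = {x ∈ Phat | blowdown x = (αe • kvec, 0)})
    (hstab : ∀ Uhat : Set (E3 × E3 × ℝ × ℝ),
      (∃ U0, IsOpen U0 ∧ Uhat = U0 ∩ Phat) → phat_e ⊆ Uhat →
      ∃ Vhat : Set (E3 × E3 × ℝ × ℝ),
        (∃ V0, IsOpen V0 ∧ Vhat = V0 ∩ Phat) ∧ phat_e ⊆ Vhat ∧
        ∀ (a γ : ℝ), 0 ≤ a → ∀ w dw : ℝ → E3,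
          IsSol8 I1 I2 I3 M1 M2 M3 a γ w dw →
          (w 0, dw 0, a, γ) ∈ Vhat →
          ∀ t ≥ 0, (w t, dw t, a, γ) ∈ Uhat) :
    ∀ U ∈ nhds ((αe • kvec, 0) : E3 × E3),
      ∃ V ∈ nhds ((αe • kvec, 0) : E3 × E3),
        ∀ pm pv : ℝ → E3, IsSol60 I1 I2 I3 M1 M2 M3 pm pv →
          (pm 0, pv 0) ∈ V → ∀ t ≥ 0, (pm t, pv t) ∈ U := by
  intro U hU
  have heq_mem : ((αe • kvec, 0) : E3 × E3) ∈ interior U := mem_interior_iff_mem_nhds.2 hU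
  have hβcont : Continuous blowdown := by
    unfold blowdown
    exact ((continuous_fst.comp continuous_snd).add
      ((continuous_snd.comp (continuous_snd.comp continuous_snd)).smul continuous_fst)).prodMk
      ((continuous_fst.comp (continuous_snd.comp continuous_snd)).smul continuous_fst)
  set U0 : Set (E3 × E3 × ℝ × ℝ) := blowdown ⁻¹' (interior U) with hU0def
  have hU0open : IsOpen U0 := isOpen_interior.preimage hβcont
  have hUe : phat_e ⊆ U0 ∩ Phat := by
    rw [hphat_e]
    rintro x ⟨hxP, hxb⟩
    refine ⟨?_, hxP⟩
    show blowdown x ∈ interior U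
    rw [hxb]; exact heq_mem
  obtain ⟨Vhat, ⟨V0, hV0open, hVhatdef⟩, hVe, hVsol⟩ :=
    hstab (U0 ∩ Phat) ⟨U0, hU0open, rfl⟩ hUe
  have hcomp : IsCompact phat_e := by
    rw [hphat_e, phat_e_eq_image]
    exact (isCompact_sphere 0 1).image (emap_continuous αe)
  have hVeV0 : phat_e ⊆ V0 := fun x hx => (hVhatdef ▸ hVe hx).1
  obtain ⟨δ, hδ, hthick⟩ := hcomp.exists_thickening_subset_open hV0open hVeV0
  have hmemV : ∀ (w0 pm0 : E3) (a0 : ℝ), ‖w0‖ = 1 → 0 ≤ a0 →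
      ‖pm0 - αe • kvec‖ < δ/3 → a0 < δ/3 →
      ((w0, pm0 - ⟪pm0, w0⟫ • w0, a0, ⟪pm0, w0⟫) : E3 × E3 × ℝ × ℝ) ∈ Vhat := by
    intro w0 pm0 a0 hw ha0 hq ha3
    rw [hVhatdef]
    refine ⟨hthick ?_, lift_mem_Phat pm0 hw ha0⟩
    rw [Metric.mem_thickening_iff]
    refine ⟨emap αe w0, ?_, lift_dist hδ hw hq ha0 ha3⟩
    rw [hphat_e]
    exact emap_mem_phat_e αe hw
  refine ⟨Metric.ball (αe • kvec, (0:E3)) (δ/3),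
    Metric.ball_mem_nhds _ (by positivity), ?_⟩
  intro pm pv hsol hstart t ht
  obtain ⟨hpm', hpv'⟩ := hsol
  rw [Metric.mem_ball, Prod.dist_eq] at hstart
  obtain ⟨hs1, hs2⟩ := max_lt_iff.mp hstart
  rw [dist_eq_norm] at hs1
  rw [dist_zero_right] at hs2
  have hpvnorm : ∀ s, ‖pv s‖ = ‖pv 0‖ := by
    have hD : ∀ s, HasDerivAt (fun τ => (⟪pv τ, pv τ⟫ : ℝ)) 0 s := by
      intro s
      have h := HasDerivAt.inner (𝕜 := ℝ) (hpv' s) (hpv' s)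
      convert h using 1
      any_goals rfl
      rw [inner_cross_self, cross_inner_self, add_zero]
    intro s
    have h2 : (⟪pv s, pv s⟫ : ℝ) = ⟪pv 0, pv 0⟫ := eq_of_hasDerivAt_zero hD s
    rw [real_inner_self_eq_norm_sq, real_inner_self_eq_norm_sq] at h2
    calc ‖pv s‖ = Real.sqrt (‖pv s‖ ^ 2) := (Real.sqrt_sq (norm_nonneg _)).symm
      _ = Real.sqrt (‖pv 0‖ ^ 2) := by rw [h2]
      _ = ‖pv 0‖ := Real.sqrt_sq (norm_nonneg _)
  by_cases hpv0 : pv 0 = 0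
  · -- pv ≡ 0
    have hpvz : ∀ s, pv s = 0 := fun s =>
      norm_eq_zero.1 (by rw [hpvnorm s, hpv0, norm_zero])
    have hpmnorm : ∀ s, ‖pm s‖ = ‖pm 0‖ := by
      have hD : ∀ s, HasDerivAt (fun τ => (⟪pm τ, pm τ⟫ : ℝ)) 0 s := by
        intro s
        have h0 := hpm' s
        rw [hpvz s, cross3_zero_left, add_zero] at h0
        have h := HasDerivAt.inner (𝕜 := ℝ) h0 h0
        convert h using 1
        any_goals rfl
        rw [inner_cross_self, cross_inner_self, add_zero]
      intro s
      have h2 : (⟪pm s, pm s⟫ : ℝ) = ⟪pm 0, pm 0⟫ := eq_of_hasDerivAt_zero hD s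
      rw [real_inner_self_eq_norm_sq, real_inner_self_eq_norm_sq] at h2
      calc ‖pm s‖ = Real.sqrt (‖pm s‖ ^ 2) := (Real.sqrt_sq (norm_nonneg _)).symm
        _ = Real.sqrt (‖pm 0‖ ^ 2) := by rw [h2]
        _ = ‖pm 0‖ := Real.sqrt_sq (norm_nonneg _)
    by_cases hpm0 : pm 0 = 0
    · -- everything zero
      have hpmz : ∀ s, pm s = 0 := fun s =>
        norm_eq_zero.1 (by rw [hpmnorm s, hpm0, norm_zero])
      have hsol8 : IsSol8 I1 I2 I3 M1 M2 M3 0 0 (fun _ => kvec) (fun _ => 0) := by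
        constructor
        · intro s
          have hz : cross3 ((fun _ => kvec) s)
              (Iinv I1 I2 I3 ((fun _ => (0:E3)) s + (0:ℝ) • (fun _ => kvec) s)) = 0 := by
            simp only [zero_smul, add_zero, Iinv_zero, cross3_zero_right]
          rw [hz]
          exact hasDerivAt_const s kvec
        · intro s
          have hz : cross3 ((fun _ => (0:E3)) s)
              (Iinv I1 I2 I3 ((fun _ => (0:E3)) s + (0:ℝ) • (fun _ => kvec) s))
              + (0:ℝ) ^ 2 • cross3 ((fun _ => kvec) s)
                (Minv M1 M2 M3 ((fun _ => kvec) s)) = 0 := by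
            simp only [cross3_zero_left]
            norm_num
          rw [hz]
          exact hasDerivAt_const s 0
      have hstart8 : ((kvec, (0:E3), (0:ℝ), (0:ℝ)) : E3 × E3 × ℝ × ℝ) ∈ Vhat := by
        have hq : ‖(0:E3) - αe • kvec‖ < δ/3 := by
          rw [hpm0] at hs1; exact hs1
        have h := hmemV kvec 0 0 norm_kvec le_rfl hq (by linarith)
        simpa using h
      have hmem := hVsol 0 0 le_rfl _ _ hsol8 hstart8 t ht
      have hb : blowdown ((kvec, (0:E3), (0:ℝ), (0:ℝ))) ∈ interior U := hmem.1
      have hbe : blowdown ((kvec, (0:E3), (0:ℝ), (0:ℝ))) = ((0:E3), (0:E3)) := by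
        simp [blowdown]
      rw [hbe] at hb
      rw [hpmz t, hpvz t]
      exact interior_subset hb
    · -- Euler case : pv ≡ 0, pm 0 ≠ 0
      have hcpos : 0 < ‖pm 0‖ := norm_pos_iff.2 hpm0
      set c : ℝ := ‖pm 0‖ with hc
      set w : ℝ → E3 := fun s => c⁻¹ • pm s with hwdef
      have hcw : ∀ s, (0:E3) + c • w s = pm s := by
        intro s
        rw [hwdef]
        simp only [smul_smul, mul_inv_cancel₀ hcpos.ne', one_smul, zero_add]
      have hsol8 : IsSol8 I1 I2 I3 M1 M2 M3 0 c w (fun _ => 0) := by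
        constructor
        · intro s
          have h := (hpm' s).const_smul c⁻¹
          rw [hpvz s, cross3_zero_left, add_zero] at h
          convert h using 1
          any_goals rfl
          show cross3 (w s) (Iinv I1 I2 I3 ((0:E3) + c • w s)) = _
          rw [hcw s, hwdef]
          exact cross3_smul_left _ _ _
        · intro s
          have hz : cross3 ((fun _ => (0:E3)) s) (Iinv I1 I2 I3 ((fun _ => (0:E3)) s + c • w s))
              + (0:ℝ) ^ 2 • cross3 (w s) (Minv M1 M2 M3 (w s)) = 0 := by
            simp only [cross3_zero_left]
            norm_num
          rw [hz]
          exact hasDerivAt_const s 0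
      have hγ0 : (⟪pm 0, w 0⟫ : ℝ) = c := by
        rw [hwdef]
        show (⟪pm 0, c⁻¹ • pm 0⟫ : ℝ) = c
        rw [real_inner_smul_right, real_inner_self_eq_norm_sq, ← hc]
        field_simp [pow_two]
      have hwn : ‖w 0‖ = 1 := by
        rw [hwdef]
        show ‖c⁻¹ • pm 0‖ = 1
        rw [norm_smul, Real.norm_eq_abs, abs_of_pos (inv_pos.2 hcpos), ← hc,
          inv_mul_cancel₀ hcpos.ne']
      have hstart8 : ((w 0, (0:E3), (0:ℝ), c) : E3 × E3 × ℝ × ℝ) ∈ Vhat := by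
        have h := hmemV (w 0) (pm 0) 0 hwn le_rfl hs1 (by linarith)
        have hz : pm 0 - (⟪pm 0, w 0⟫ : ℝ) • w 0 = 0 := by
          rw [hγ0, hwdef]
          show pm 0 - c • c⁻¹ • pm 0 = 0
          rw [smul_smul, mul_inv_cancel₀ hcpos.ne', one_smul, sub_self]
        rw [hz, hγ0] at h
        exact h
      have hmem := hVsol 0 c le_rfl w _ hsol8 hstart8 t ht
      have hb : blowdown ((w t, (0:E3), (0:ℝ), c)) ∈ interior U := hmem.1
      have hbe : blowdown ((w t, (0:E3), (0:ℝ), c)) = (pm t, pv t) := by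
        show ((0:E3) + c • w t, (0:ℝ) • w t) = (pm t, pv t)
        rw [hcw t, zero_smul, hpvz t]
      rw [hbe] at hb
      exact interior_subset hb
  · -- generic case : pv 0 ≠ 0
    have hapos : 0 < ‖pv 0‖ := norm_pos_iff.2 hpv0
    set a : ℝ := ‖pv 0‖ with hadef
    have hγc : ∀ s, (⟪pm s, pv s⟫ : ℝ) = ⟪pm 0, pv 0⟫ := by
      have hD : ∀ s, HasDerivAt (fun τ => (⟪pm τ, pv τ⟫ : ℝ)) 0 s := by
        intro s
        have h := HasDerivAt.inner (𝕜 := ℝ) (hpm' s) (hpv' s)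
        convert h using 1
        any_goals rfl
        rw [inner_add_left]
        have t1 := triple (pm s) (pv s) (Iinv I1 I2 I3 (pm s))
        have t2 := cross_inner_self (pv s) (Minv M1 M2 M3 (pv s))
        linarith
      exact fun s => eq_of_hasDerivAt_zero hD s
    set γ : ℝ := a⁻¹ * ⟪pm 0, pv 0⟫ with hγdef
    set w : ℝ → E3 := fun s => a⁻¹ • pv s with hwdef
    set dw : ℝ → E3 := fun s => pm s - (γ * a⁻¹) • pv s with hdwdef
    have hplus : ∀ s, dw s + γ • w s = pm s := by
      intro s
      rw [hdwdef, hwdef]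
      show pm s - (γ * a⁻¹) • pv s + γ • a⁻¹ • pv s = pm s
      rw [smul_smul]
      abel
    have hsol8 : IsSol8 I1 I2 I3 M1 M2 M3 a γ w dw := by
      constructor
      · intro s
        have h := (hpv' s).const_smul a⁻¹
        convert h using 1
        any_goals rfl
        rw [hplus s, hwdef]
        exact cross3_smul_left _ _ _
      · intro s
        have h := (hpm' s).sub ((hpv' s).const_smul (γ * a⁻¹))
        convert h using 1
        any_goals rfl
        rw [hplus s, hdwdef, hwdef]
        show cross3 (pm s - (γ * a⁻¹) • pv s) (Iinv I1 I2 I3 (pm s))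
            + a ^ 2 • cross3 (a⁻¹ • pv s) (Minv M1 M2 M3 (a⁻¹ • pv s)) = _
        rw [cross3_sub_left, cross3_smul_left, Minv_smul, cross3_smul_right,
          cross3_smul_left, smul_smul, smul_smul]
        have hone : a ^ 2 * a⁻¹ * a⁻¹ = 1 := by
          rw [pow_two]
          field_simp
        rw [hone, one_smul]
        abel
    have hγw : (⟪pm 0, w 0⟫ : ℝ) = γ := by
      rw [hwdef, hγdef]
      show (⟪pm 0, a⁻¹ • pv 0⟫ : ℝ) = a⁻¹ * ⟪pm 0, pv 0⟫
      rw [real_inner_smul_right]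
    have hwn : ‖w 0‖ = 1 := by
      rw [hwdef]
      show ‖a⁻¹ • pv 0‖ = 1
      rw [norm_smul, Real.norm_eq_abs, abs_of_pos (inv_pos.2 hapos), ← hadef,
        inv_mul_cancel₀ hapos.ne']
    have hstart8 : ((w 0, dw 0, a, γ) : E3 × E3 × ℝ × ℝ) ∈ Vhat := by
      have h := hmemV (w 0) (pm 0) a hwn (norm_nonneg _) hs1 hs2
      have hz : pm 0 - (⟪pm 0, w 0⟫ : ℝ) • w 0 = dw 0 := by
        rw [hγw, hdwdef, hwdef]
        show pm 0 - γ • a⁻¹ • pv 0 = pm 0 - (γ * a⁻¹) • pv 0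
        rw [smul_smul]
      rw [hz, hγw] at h
      exact h
    have hmem := hVsol a γ (norm_nonneg _) w dw hsol8 hstart8 t ht
    have hb : blowdown ((w t, dw t, a, γ)) ∈ interior U := hmem.1
    have hbe : blowdown ((w t, dw t, a, γ)) = (pm t, pv t) := by
      show (dw t + γ • w t, a • w t) = (pm t, pv t)
      rw [hplus t, hwdef]
      show (pm t, a • a⁻¹ • pv t) = (pm t, pv t)
      rw [smul_smul, mul_inv_cancel₀ hapos.ne', one_smul]
    rw [hbe] at hb
    exact interior_subset hb
end
end

section
/- Let a ≥ 0 and γ ∈ ℝ be fixed and let t ↦ (w(t),ẇ(t)) be any solution of the blown-up system (8) on an interval J. Then the curve t ↦ (π(t),p(t)) := (ẇ(t) + γ w(t), a w(t)) is a solution of the Poisson system (60) on J; i.e. the blown-up vector field is a lift of the original vector field by the blow-down map. -/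
noncomputable section

open scoped RealInnerProductSpace

/-- the blown-up vector field (8) is a lift of the vector field of
(60) by the blow-down map: if (w,ẇ) solves (8) on an interval J then
(π,p) = (ẇ + γw, aw) solves (60) on J. -/
theorem statement6 (I1 I2 I3 M1 M2 M3 : ℝ)
    (hI1 : 0 < I1) (hI2 : 0 < I2) (hI3 : 0 < I3)
    (hM1 : 0 < M1) (hM2 : 0 < M2) (hM3 : 0 < M3)
    (a γ : ℝ) (ha : 0 ≤ a)
    (J : Set ℝ) (hJ : J.OrdConnected)
    (w dw : ℝ → E3) (hsol : IsSol8On I1 I2 I3 M1 M2 M3 a γ J w dw) :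
    IsSol60On I1 I2 I3 M1 M2 M3 J (fun t => dw t + γ • w t) (fun t => a • w t) := by
  obtain ⟨h1, h2⟩ := hsol
  constructor
  · intro t ht
    have hd := ((h2 t ht).add ((h1 t ht).const_smul γ))
    refine hd.congr_deriv ?_
    ext i
    fin_cases i <;>
      simp [cross3, vec3, Iinv, Minv, PiLp.add_apply, PiLp.smul_apply,
        smul_eq_mul] <;> ring
  · intro t ht
    have hd := (h1 t ht).const_smul a
    refine hd.congr_deriv ?_
    ext i
    fin_cases i <;>
      simp [cross3, vec3, Iinv, Minv, PiLp.add_apply, PiLp.smul_apply,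
        smul_eq_mul] <;> ring
end
end

section
/- Along every solution t ↦ (w(t),ẇ(t)) of (8) (for any fixed a ≥ 0 and γ ∈ ℝ), the pulled-back energy Ĥ = ½ (ẇ+γw)·(𝐈⁻¹(ẇ+γw)) + ½ a² w·(𝐌⁻¹w) is constant in t. Moreover, if a = 0 then ‖ẇ(t)+γw(t)‖ is constant in t, and if in addition ‖w(0)‖ = 1 and w(0)·ẇ(0) = 0 then ‖ẇ(t)‖ is constant in t. -/
noncomputable section

open scoped RealInnerProductSpace

lemma coordD {f : ℝ → E3} {v : E3} {t : ℝ} (h : HasDerivAt f v t) (i : Fin 3) :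
    HasDerivAt (fun s => f s i) (v i) t := by
  have := (EuclideanSpace.proj (𝕜 := ℝ) i).hasFDerivAt.comp_hasDerivAt t h
  exact this

lemma constf {f : ℝ → ℝ} (h : ∀ t, HasDerivAt f 0 t) : ∀ s t, f t = f s := by
  intro s t
  exact is_const_of_deriv_eq_zero (fun x => (h x).differentiableAt) (fun x => (h x).deriv) t s

lemma norm_const (g : ℝ → E3) (v : ℝ → E3)
    (hg : ∀ t, HasDerivAt g (v t) t)
    (hz : ∀ t, g t 0 * v t 0 + g t 1 * v t 1 + g t 2 * v t 2 = 0) :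
    ∀ s t, ‖g t‖ = ‖g s‖ := by
  have key : ∀ s t : ℝ, g t 0 ^ 2 + g t 1 ^ 2 + g t 2 ^ 2
      = g s 0 ^ 2 + g s 1 ^ 2 + g s 2 ^ 2 := by
    apply constf
    intro t
    have h := (((coordD (hg t) 0).pow 2).add ((coordD (hg t) 1).pow 2)).add
      ((coordD (hg t) 2).pow 2)
    have e : (2:ℕ) * g t 0 ^ (2-1) * v t 0 + (2:ℕ) * g t 1 ^ (2-1) * v t 1
        + (2:ℕ) * g t 2 ^ (2-1) * v t 2 = 0 := by
      push_cast; nlinarith [hz t]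
    rw [e] at h; exact h
  intro s t
  rw [EuclideanSpace.norm_eq, EuclideanSpace.norm_eq]
  congr 1
  simpa [Fin.sum_univ_three, sq_abs] using key s t

/-- along every solution of (8) the pulled-back energy
Ĥ = ½(ẇ+γw)·(𝐈⁻¹(ẇ+γw)) + ½a² w·(𝐌⁻¹w) is constant; if a = 0 then ‖ẇ+γw‖ is
constant, and if moreover ‖w(0)‖ = 1 and w(0)·ẇ(0) = 0 then ‖ẇ‖ is constant. -/
theorem statement8 (I1 I2 I3 M1 M2 M3 : ℝ)
    (hI1 : 0 < I1) (hI2 : 0 < I2) (hI3 : 0 < I3)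
    (hM1 : 0 < M1) (hM2 : 0 < M2) (hM3 : 0 < M3)
    (a γ : ℝ) (ha : 0 ≤ a)
    (w dw : ℝ → E3) (hsol : IsSol8 I1 I2 I3 M1 M2 M3 a γ w dw) :
    (∀ s t : ℝ,
      (1 / 2) * ⟪dw t + γ • w t, Iinv I1 I2 I3 (dw t + γ • w t)⟫
          + (1 / 2) * a ^ 2 * ⟪w t, Minv M1 M2 M3 (w t)⟫
        = (1 / 2) * ⟪dw s + γ • w s, Iinv I1 I2 I3 (dw s + γ • w s)⟫
          + (1 / 2) * a ^ 2 * ⟪w s, Minv M1 M2 M3 (w s)⟫) ∧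
    (a = 0 → ∀ s t : ℝ, ‖dw t + γ • w t‖ = ‖dw s + γ • w s‖) ∧
    (a = 0 → ‖w 0‖ = 1 → ⟪w 0, dw 0⟫ = 0 → ∀ s t : ℝ, ‖dw t‖ = ‖dw s‖) := by
  obtain ⟨hw, hdw⟩ := hsol
  refine ⟨?_, ?_, ?_⟩
  · -- energy conservation
    have hpt : ∀ u : ℝ,
        (1 / 2) * ⟪dw u + γ • w u, Iinv I1 I2 I3 (dw u + γ • w u)⟫
          + (1 / 2) * a ^ 2 * ⟪w u, Minv M1 M2 M3 (w u)⟫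
        = 1/2 * ((dw u 0 + γ * w u 0)^2/I1 + (dw u 1 + γ * w u 1)^2/I2
            + (dw u 2 + γ * w u 2)^2/I3)
          + 1/2*a^2 * ((w u 0)^2/M1 + (w u 1)^2/M2 + (w u 2)^2/M3) := by
      intro u
      simp [Iinv, Minv, vec3, PiLp.inner_apply, Fin.sum_univ_three]
      ring
    have hder : ∀ t : ℝ, HasDerivAt (fun u => 1/2 * ((dw u 0 + γ * w u 0)^2/I1
        + (dw u 1 + γ * w u 1)^2/I2 + (dw u 2 + γ * w u 2)^2/I3)
        + 1/2*a^2 * ((w u 0)^2/M1 + (w u 1)^2/M2 + (w u 2)^2/M3)) 0 t := by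
      intro t
      have hp : ∀ i : Fin 3, HasDerivAt (fun s => dw s i + γ * w s i)
          ((cross3 (dw t) (Iinv I1 I2 I3 (dw t + γ • w t))
            + a ^ 2 • cross3 (w t) (Minv M1 M2 M3 (w t))) i
           + γ * cross3 (w t) (Iinv I1 I2 I3 (dw t + γ • w t)) i) t := fun i =>
        (coordD (hdw t) i).add ((coordD (hw t) i).const_mul γ)
      have hq : ∀ i : Fin 3, HasDerivAt (fun s => w s i)
          (cross3 (w t) (Iinv I1 I2 I3 (dw t + γ • w t)) i) t := fun i => coordD (hw t) i
      have h1 := ((((hp 0).pow 2).div_const I1).add (((hp 1).pow 2).div_const I2)).add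
        (((hp 2).pow 2).div_const I3)
      have h2 := ((((hq 0).pow 2).div_const M1).add (((hq 1).pow 2).div_const M2)).add
        (((hq 2).pow 2).div_const M3)
      have H := (h1.const_mul (1/2 : ℝ)).add (h2.const_mul (1/2*a^2 : ℝ))
      refine H.congr_deriv ?_
      simp [cross3, Iinv, Minv, vec3]
      ring
    intro s t
    rw [hpt t, hpt s]
    exact constf hder s t
  · -- a = 0 : ‖dw + γ w‖ constant
    intro ha0; subst ha0
    apply norm_const (fun t => dw t + γ • w t)
      (fun t => cross3 (dw t) (Iinv I1 I2 I3 (dw t + γ • w t))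
        + (0:ℝ) ^ 2 • cross3 (w t) (Minv M1 M2 M3 (w t))
        + γ • cross3 (w t) (Iinv I1 I2 I3 (dw t + γ • w t)))
    · intro t
      exact (hdw t).add ((hw t).const_smul γ)
    · intro t
      simp [cross3, Iinv, Minv, vec3]
      ring
  · -- a = 0 : ‖dw‖ constant
    intro ha0 _ _; subst ha0
    apply norm_const dw
      (fun t => cross3 (dw t) (Iinv I1 I2 I3 (dw t + γ • w t))
        + (0:ℝ) ^ 2 • cross3 (w t) (Minv M1 M2 M3 (w t)))
    · exact hdw
    · intro t
      simp [cross3, Iinv, Minv, vec3]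
      ring
end
end

section
/- Let α_e ∈ ℝ, let w₀ ∈ ℝ³ with ‖w₀‖ = 1, and set ẇ₀ = α_e k − α_e (k·w₀) w₀, γ = α_e (k·w₀), a = 0. Let R(θ) ∈ SO(3) denote rotation by angle θ about the axis k. Then the curve t ↦ ( R(−α_e t/I₃) w₀, R(−α_e t/I₃) ẇ₀ ) is a solution of (8) with a = 0 and parameter γ; i.e. each point of the blown-up relative equilibrium set is a relative equilibrium with generator −α_e/I₃. In particular, the points (w,ẇ) = (k, 0) with γ = α_e and (w,ẇ) = (−k, 0) with γ = −α_e are equilibria of (8) with a = 0. -/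
noncomputable section

open scoped RealInnerProductSpace

/-- Rotation by angle θ about the axis k = (0,0,1). -/
def rotk (θ : ℝ) (v : E3) : E3 :=
  vec3 (Real.cos θ * v 0 - Real.sin θ * v 1) (Real.sin θ * v 0 + Real.cos θ * v 1) (v 2)


@[simp] lemma vec3_app0 (x y z : ℝ) : vec3 x y z 0 = x := rfl
@[simp] lemma vec3_app1 (x y z : ℝ) : vec3 x y z 1 = y := rfl
@[simp] lemma vec3_app2 (x y z : ℝ) : vec3 x y z 2 = z := rfl
@[simp] lemma E3_smul_app (c : ℝ) (u : E3) (i : Fin 3) : (c • u) i = c * u i := rfl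
@[simp] lemma E3_add_app (u v : E3) (i : Fin 3) : (u + v) i = u i + v i := rfl
@[simp] lemma E3_zero_app (i : Fin 3) : (0 : E3) i = 0 := rfl
@[simp] lemma E3_neg_app (u : E3) (i : Fin 3) : (-u) i = -(u i) := rfl

lemma E3_ext {u v : E3} (h0 : u 0 = v 0) (h1 : u 1 = v 1) (h2 : u 2 = v 2) : u = v := by
  ext i; fin_cases i <;> assumption

lemma rotk_add (θ : ℝ) (u v : E3) : rotk θ (u + v) = rotk θ u + rotk θ v := by
  apply E3_ext <;> simp [rotk] <;> ring

lemma rotk_smul (θ c : ℝ) (u : E3) : rotk θ (c • u) = c • rotk θ u := by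
  apply E3_ext <;> simp [rotk] <;> ring

lemma rotk_kvec_smul (θ c : ℝ) : rotk θ (c • kvec) = c • kvec := by
  apply E3_ext <;> simp [rotk, kvec]

lemma hasDerivAt_rotk (m : ℝ) (v : E3) (t : ℝ) :
    HasDerivAt (fun s => rotk (m * s) v) (cross3 (rotk (m * t) v) (vec3 0 0 (-m))) t := by
  have hlin : HasDerivAt (fun s : ℝ => m * s) m t := by
    simpa using (hasDerivAt_id t).const_mul m
  have hP : HasDerivAt (fun s : ℝ => Real.cos (m * s) • vec3 (v 0) (v 1) 0)
      ((-Real.sin (m * t) * m) • vec3 (v 0) (v 1) 0) t :=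
    ((Real.hasDerivAt_cos (m * t)).comp t hlin).smul_const _
  have hQ : HasDerivAt (fun s : ℝ => Real.sin (m * s) • vec3 (-(v 1)) (v 0) 0)
      ((Real.cos (m * t) * m) • vec3 (-(v 1)) (v 0) 0) t :=
    ((Real.hasDerivAt_sin (m * t)).comp t hlin).smul_const _
  have hsum : HasDerivAt (fun s : ℝ => Real.cos (m * s) • vec3 (v 0) (v 1) 0
      + Real.sin (m * s) • vec3 (-(v 1)) (v 0) 0 + vec3 0 0 (v 2))
      ((-Real.sin (m * t) * m) • vec3 (v 0) (v 1) 0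
        + (Real.cos (m * t) * m) • vec3 (-(v 1)) (v 0) 0) t :=
    (hP.add hQ).add_const (vec3 0 0 (v 2))
  have hfun : (fun s : ℝ => Real.cos (m * s) • vec3 (v 0) (v 1) 0
      + Real.sin (m * s) • vec3 (-(v 1)) (v 0) 0 + vec3 0 0 (v 2))
      = fun s => rotk (m * s) v := by
    funext s; apply E3_ext <;> simp [rotk] <;> ring
  rw [hfun] at hsum
  convert hsum using 1
  apply E3_ext <;> simp [cross3, rotk] <;> ring

/-- each point of the blown-up relative equilibrium set is a
relative equilibrium of (8) (with a = 0) with generator −α_e/I₃: the curve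
t ↦ (R(−α_e t/I₃)w₀, R(−α_e t/I₃)ẇ₀) is a solution. In particular (k,0) with
γ = α_e and (−k,0) with γ = −α_e are equilibria. -/
theorem statement11 (I1 I2 I3 M1 M2 M3 : ℝ)
    (hI1 : 0 < I1) (hI2 : 0 < I2) (hI3 : 0 < I3)
    (hM1 : 0 < M1) (hM2 : 0 < M2) (hM3 : 0 < M3)
    (αe : ℝ) (w0 : E3) (hw0 : ‖w0‖ = 1)
    (dw0 : E3) (hdw0 : dw0 = αe • kvec - (αe * ⟪kvec, w0⟫) • w0)
    (γ : ℝ) (hγ : γ = αe * ⟪kvec, w0⟫) :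
    IsSol8 I1 I2 I3 M1 M2 M3 0 γ
      (fun t => rotk (-(αe / I3) * t) w0) (fun t => rotk (-(αe / I3) * t) dw0) ∧
    IsSol8 I1 I2 I3 M1 M2 M3 0 αe (fun _ => kvec) (fun _ => (0 : E3)) ∧
    IsSol8 I1 I2 I3 M1 M2 M3 0 (-αe) (fun _ => -kvec) (fun _ => (0 : E3)) := by

  have hkey : dw0 + γ • w0 = αe • kvec := by
    rw [hdw0, hγ]; abel
  set m : ℝ := -(αe / I3) with hm
  have hsum : ∀ s : ℝ, rotk (m * s) dw0 + γ • rotk (m * s) w0 = αe • kvec := by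
    intro s; rw [← rotk_smul, ← rotk_add, hkey, rotk_kvec_smul]
  have hIk : Iinv I1 I2 I3 (αe • kvec) = vec3 0 0 (-m) := by
    apply E3_ext <;> simp [Iinv, kvec, hm]
  refine ⟨⟨?_, ?_⟩, ⟨?_, ?_⟩, ⟨?_, ?_⟩⟩
  · intro t
    have h := hasDerivAt_rotk m w0 t
    simpa [hsum t, hIk] using h
  · intro t
    have h := hasDerivAt_rotk m dw0 t
    simpa [hsum t, hIk] using h
  · intro t
    have h0 : cross3 kvec (Iinv I1 I2 I3 (αe • kvec)) = 0 := by
      apply E3_ext <;> simp [cross3, Iinv, kvec]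
    simpa [h0] using hasDerivAt_const t kvec
  · intro t
    have h0 : cross3 (0 : E3) (Iinv I1 I2 I3 (αe • kvec)) = 0 := by
      apply E3_ext <;> simp [cross3, Iinv, kvec]
    simpa [h0] using hasDerivAt_const t (0 : E3)
  · intro t
    have h0 : cross3 (-kvec) (Iinv I1 I2 I3 (αe • kvec)) = 0 := by
      apply E3_ext <;> simp [cross3, Iinv, kvec]
    simpa [h0] using hasDerivAt_const t (-kvec)
  · intro t
    have h0 : cross3 (0 : E3) (Iinv I1 I2 I3 (αe • kvec)) = 0 := by
      apply E3_ext <;> simp [cross3, Iinv, kvec]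
    simpa [h0] using hasDerivAt_const t (0 : E3)
end
end

section
/- Let α_e > 0 and let Q, P ∈ ℝ with Q² + P² < 4α_e, and define π(Q,P) = ( √(α_e − ¼(Q²+P²)) · P, √(α_e − ¼(Q²+P²)) · Q, α_e − ½(Q²+P²) ) ∈ ℝ³. Then ‖π(Q,P)‖ = α_e, and ½ π(Q,P)·(𝐈⁻¹π(Q,P)) = ½ (α_e − ¼(Q²+P²)) ( (1/I₁ − 1/I₃) P² + (1/I₂ − 1/I₃) Q² ) + α_e²/(2I₃). -/
noncomputable section

open scoped RealInnerProductSpace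

/-- the chart π(Q,P) on the rigid-body reduced space ‖π‖ = α_e,
and the Hamiltonian in these coordinates. -/
theorem statement14 (I1 I2 I3 : ℝ) (hI1 : 0 < I1) (hI2 : 0 < I2) (hI3 : 0 < I3)
    (αe : ℝ) (hαe : 0 < αe) (Q P : ℝ) (hQP : Q ^ 2 + P ^ 2 < 4 * αe)
    (piv : E3)
    (hpiv : piv = vec3 (Real.sqrt (αe - (Q ^ 2 + P ^ 2) / 4) * P)
      (Real.sqrt (αe - (Q ^ 2 + P ^ 2) / 4) * Q) (αe - (Q ^ 2 + P ^ 2) / 2)) :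
    ‖piv‖ = αe ∧
    (1 / 2) * ⟪piv, Iinv I1 I2 I3 piv⟫
      = (1 / 2) * (αe - (Q ^ 2 + P ^ 2) / 4)
          * ((1 / I1 - 1 / I3) * P ^ 2 + (1 / I2 - 1 / I3) * Q ^ 2)
        + αe ^ 2 / (2 * I3) := by

  have hs : 0 ≤ αe - (Q ^ 2 + P ^ 2) / 4 := by linarith
  have hsq : Real.sqrt (αe - (Q ^ 2 + P ^ 2) / 4) ^ 2 = αe - (Q ^ 2 + P ^ 2) / 4 :=
    Real.sq_sqrt hs
  constructor
  · have h2 : ‖piv‖ ^ 2 = αe ^ 2 := by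
      rw [← real_inner_self_eq_norm_sq, hpiv]
      simp only [vec3, PiLp.inner_apply, RCLike.inner_apply, starRingEnd_apply]
      rw [Fin.sum_univ_three]
      simp [PiLp.toLp_apply]
      nlinarith [hsq]
    have := sq_abs ‖piv‖
    nlinarith [norm_nonneg piv, hαe]
  · rw [hpiv]
    simp only [vec3, Iinv, PiLp.inner_apply, RCLike.inner_apply, starRingEnd_apply]
    rw [Fin.sum_univ_three]
    set s := Real.sqrt (αe - (Q ^ 2 + P ^ 2) / 4) with hsdef
    simp [PiLp.toLp_apply]
    field_simp
    linear_combination (16 * I3 * (P ^ 2 * I2 + I1 * Q ^ 2)) * hsq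
end
end

section
/- Let I₁, I₂, I₃ be positive reals with either I₃ > max(I₁, I₂) or I₃ < min(I₁, I₂), and let α_e ∈ ℝ. Then π = α_e k is a Lyapunov stable equilibrium of the rigid-body (Euler) equation dπ/dt = π×(𝐈⁻¹π) on ℝ³: for every ε > 0 there exists δ > 0 such that every solution with ‖π(0) − α_e k‖ < δ satisfies ‖π(t) − α_e k‖ < ε for all t ≥ 0. -/
noncomputable section

open scoped RealInnerProductSpace

set_option maxHeartbeats 1000000 in
/-- rotation about a long or short axis: π = α_e k is a Lyapunov
stable equilibrium of the Euler equation dπ/dt = π×(𝐈⁻¹π) when I₃ is not the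
intermediate moment of inertia. -/
theorem statement19 (I1 I2 I3 : ℝ) (hI1 : 0 < I1) (hI2 : 0 < I2) (hI3 : 0 < I3)
    (hord : I3 > max I1 I2 ∨ I3 < min I1 I2) (αe : ℝ) :
    ∀ ε > 0, ∃ δ > 0, ∀ pm : ℝ → E3,
      (∀ t : ℝ, HasDerivAt pm (cross3 (pm t) (Iinv I1 I2 I3 (pm t))) t) →
      ‖pm 0 - αe • kvec‖ < δ →
      ∀ t ≥ 0, ‖pm t - αe • kvec‖ < ε := by
  intro ε hε
  have hI1' := hI1.ne'
  have hI2' := hI2.ne'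
  have hI3' := hI3.ne'
  -- choose the sign s so that s*(1/Ii - 1/I3) > 0 for i = 1,2
  obtain ⟨s, hsa, hsb⟩ : ∃ s : ℝ, 0 < s * (1/I1 - 1/I3) ∧ 0 < s * (1/I2 - 1/I3) := by
    rcases hord with h | h
    · have h1 : I1 < I3 := lt_of_le_of_lt (le_max_left _ _) h
      have h2 : I2 < I3 := lt_of_le_of_lt (le_max_right _ _) h
      have e1 := one_div_lt_one_div_of_lt hI1 h1
      have e2 := one_div_lt_one_div_of_lt hI2 h2
      exact ⟨1, by linarith, by linarith⟩
    · have h1 : I3 < I1 := lt_of_lt_of_le h (min_le_left _ _)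
      have h2 : I3 < I2 := lt_of_lt_of_le h (min_le_right _ _)
      have e1 := one_div_lt_one_div_of_lt hI3 h1
      have e2 := one_div_lt_one_div_of_lt hI3 h2
      exact ⟨-1, by linarith, by linarith⟩
  set sa : ℝ := s * (1/I1 - 1/I3) with hsadef
  set sb : ℝ := s * (1/I2 - 1/I3) with hsbdef
  set c : ℝ := min sa sb with hcdef
  set C : ℝ := max sa sb with hCdef
  have hc : 0 < c := lt_min hsa hsb
  have hCpos : 0 < C := lt_of_lt_of_le hc min_le_max
  set C' : ℝ := C / c with hC'def
  have hC'1 : 1 ≤ C' := (one_le_div hc).mpr min_le_max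
  have hC'pos : 0 < C' := lt_of_lt_of_le one_pos hC'1
  set A : ℝ := |αe| with hAdef
  have hA0 : 0 ≤ A := abs_nonneg _
  have hA2 : A ^ 2 = αe ^ 2 := sq_abs _
  have hD : 0 < C' + 25 * (2 + C' + 2 * A) + 1 := by linarith
  set δ : ℝ := min 1 (ε ^ 2 / (2 * (C' + 25 * (2 + C' + 2 * A) + 1))) with hδdef
  have hδpos : 0 < δ := lt_min one_pos (div_pos (pow_pos hε 2) (by linarith))
  have hδ1 : δ ≤ 1 := min_le_left _ _
  have hδε : (C' + 25 * (2 + C' + 2 * A)) * δ ≤ ε ^ 2 / 2 := by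
    have h1 : δ ≤ ε ^ 2 / (2 * (C' + 25 * (2 + C' + 2 * A) + 1)) := min_le_right _ _
    have h2 : (C' + 25 * (2 + C' + 2 * A)) * δ ≤ (C' + 25 * (2 + C' + 2 * A) + 1) * δ := by linarith [hδpos.le]
    have h3 : (C' + 25 * (2 + C' + 2 * A) + 1) * δ ≤ ε ^ 2 / 2 := by
      calc (C' + 25 * (2 + C' + 2 * A) + 1) * δ ≤ (C' + 25 * (2 + C' + 2 * A) + 1) * (ε ^ 2 / (2 * (C' + 25 * (2 + C' + 2 * A) + 1))) :=
            mul_le_mul_of_nonneg_left h1 hD.le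
        _ = ε ^ 2 / 2 := by
            have hDne : (C' + 25 * (2 + C' + 2 * A) + 1) ≠ 0 := hD.ne'
            field_simp
    linarith
  refine ⟨δ, hδpos, ?_⟩
  intro pm hpm h0 t ht
  -- coordinate derivatives
  have proj : ∀ (i : Fin 3) (τ : ℝ),
      HasDerivAt (fun τ => pm τ i) ((cross3 (pm τ) (Iinv I1 I2 I3 (pm τ))) i) τ := by
    intro i τ
    exact (EuclideanSpace.proj i).hasFDerivAt.comp_hasDerivAt τ (hpm τ)
  have hx : ∀ τ : ℝ, HasDerivAt (fun τ => pm τ 0)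
      (pm τ 1 * (pm τ 2 / I3) - pm τ 2 * (pm τ 1 / I2)) τ := fun τ => proj 0 τ
  have hy : ∀ τ : ℝ, HasDerivAt (fun τ => pm τ 1)
      (pm τ 2 * (pm τ 0 / I1) - pm τ 0 * (pm τ 2 / I3)) τ := fun τ => proj 1 τ
  have hz : ∀ τ : ℝ, HasDerivAt (fun τ => pm τ 2)
      (pm τ 0 * (pm τ 1 / I2) - pm τ 1 * (pm τ 0 / I1)) τ := fun τ => proj 2 τ
  -- conserved: total angular momentum squared
  have hNd : ∀ τ : ℝ, HasDerivAt (fun τ => (pm τ 0) ^ 2 + (pm τ 1) ^ 2 + (pm τ 2) ^ 2) 0 τ := by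
    intro τ
    have h := (((hx τ).pow 2).add ((hy τ).pow 2)).add ((hz τ).pow 2)
    refine h.congr_deriv ?_
    push_cast
    field_simp
    ring
  have hN : ∀ τ : ℝ, (pm τ 0) ^ 2 + (pm τ 1) ^ 2 + (pm τ 2) ^ 2
      = (pm 0 0) ^ 2 + (pm 0 1) ^ 2 + (pm 0 2) ^ 2 := fun τ =>
    is_const_of_deriv_eq_zero (fun τ => (hNd τ).differentiableAt)
      (fun τ => (hNd τ).deriv) τ 0
  -- conserved: energy-Casimir combination
  have hGd : ∀ τ : ℝ, HasDerivAt
      (fun τ => sa * (pm τ 0) ^ 2 + sb * (pm τ 1) ^ 2) 0 τ := by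
    intro τ
    have h := (((hx τ).pow 2).const_mul sa).add (((hy τ).pow 2).const_mul sb)
    refine h.congr_deriv ?_
    rw [hsadef, hsbdef]
    push_cast
    field_simp
    ring
  have hG : ∀ τ : ℝ, sa * (pm τ 0) ^ 2 + sb * (pm τ 1) ^ 2
      = sa * (pm 0 0) ^ 2 + sb * (pm 0 1) ^ 2 := fun τ =>
    is_const_of_deriv_eq_zero (fun τ => (hGd τ).differentiableAt)
      (fun τ => (hGd τ).deriv) τ 0
  -- continuity of the third coordinate
  have hgc : Continuous fun τ => |pm τ 2 - αe| := by
    have hzc : Continuous fun τ => pm τ 2 :=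
      continuous_iff_continuousAt.mpr fun τ => (hz τ).continuousAt
    exact (hzc.sub continuous_const).abs
  clear hpm proj hx hy hz hNd hGd
  -- norm in coordinates
  have enorm : ∀ τ : ℝ, ‖pm τ - αe • kvec‖ ^ 2
      = (pm τ 0) ^ 2 + (pm τ 1) ^ 2 + (pm τ 2 - αe) ^ 2 := by
    intro τ
    rw [EuclideanSpace.norm_eq, Real.sq_sqrt (by positivity)]
    simp only [Fin.sum_univ_three, Real.norm_eq_abs, sq_abs]
    have e0 : (pm τ - αe • kvec) 0 = pm τ 0 := by simp [kvec, vec3]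
    have e1 : (pm τ - αe • kvec) 1 = pm τ 1 := by simp [kvec, vec3]
    have e2 : (pm τ - αe • kvec) 2 = pm τ 2 - αe := by simp [kvec, vec3]
    rw [e0, e1, e2]
  -- initial bound
  have h0sq : (pm 0 0) ^ 2 + (pm 0 1) ^ 2 + (pm 0 2 - αe) ^ 2 < δ ^ 2 := by
    rw [← enorm 0]
    exact pow_lt_pow_left₀ h0 (norm_nonneg _) two_ne_zero
  have hP0 : (pm 0 0) ^ 2 + (pm 0 1) ^ 2 < δ ^ 2 := by
    linarith [sq_nonneg (pm 0 2 - αe)]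
  have habsw0 : |pm 0 2 - αe| < δ := by
    have h1 : |pm 0 2 - αe| ^ 2 < δ ^ 2 := by
      rw [sq_abs]; linarith [sq_nonneg (pm 0 0), sq_nonneg (pm 0 1)]
    exact lt_of_pow_lt_pow_left₀ 2 hδpos.le h1
  -- equatorial part stays small
  have hP : ∀ τ : ℝ, (pm τ 0) ^ 2 + (pm τ 1) ^ 2 ≤ C' * δ ^ 2 := by
    intro τ
    have h1 : c * ((pm τ 0) ^ 2 + (pm τ 1) ^ 2) ≤ sa * (pm τ 0) ^ 2 + sb * (pm τ 1) ^ 2 := by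
      rw [mul_add]
      exact add_le_add (mul_le_mul_of_nonneg_right (min_le_left sa sb) (sq_nonneg _))
        (mul_le_mul_of_nonneg_right (min_le_right sa sb) (sq_nonneg _))
    have h2 : sa * (pm 0 0) ^ 2 + sb * (pm 0 1) ^ 2 ≤ C * ((pm 0 0) ^ 2 + (pm 0 1) ^ 2) := by
      rw [mul_add]
      exact add_le_add (mul_le_mul_of_nonneg_right (le_max_left sa sb) (sq_nonneg _))
        (mul_le_mul_of_nonneg_right (le_max_right sa sb) (sq_nonneg _))
    have h4 : C * ((pm 0 0) ^ 2 + (pm 0 1) ^ 2) ≤ C * δ ^ 2 :=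
      mul_le_mul_of_nonneg_left hP0.le hCpos.le
    have h3 : c * ((pm τ 0) ^ 2 + (pm τ 1) ^ 2) ≤ C * δ ^ 2 := by
      have h5 := hG τ
      linarith
    rw [hC'def, div_mul_eq_mul_div, le_div_iff₀ hc]
    linarith
  -- η and θ
  set η : ℝ := δ * (δ + 2 * A) + δ ^ 2 + C' * δ ^ 2 with hηdef
  have hηpos : 0 < η := by positivity
  set θ : ℝ := Real.sqrt η with hθdef
  have hθsq : θ ^ 2 = η := Real.sq_sqrt hηpos.le
  have hθ0 : 0 ≤ θ := Real.sqrt_nonneg _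
  have hδθ : δ ≤ θ := by
    rw [hθdef, show δ = Real.sqrt (δ ^ 2) from (Real.sqrt_sq hδpos.le).symm]
    apply Real.sqrt_le_sqrt
    have h1 : 0 ≤ δ * (2 * A) := by positivity
    have h2 : 0 ≤ C' * δ ^ 2 := by positivity
    linarith
  -- |z²-αe²| ≤ η everywhere
  have hz0diff : |(pm 0 2) ^ 2 - αe ^ 2| ≤ δ * (δ + 2 * A) := by
    have h1 : (pm 0 2) ^ 2 - αe ^ 2 = (pm 0 2 - αe) * (pm 0 2 + αe) := by ring
    rw [h1, abs_mul]
    have h2 : |pm 0 2 + αe| ≤ |pm 0 2 - αe| + 2 * A := by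
      calc |pm 0 2 + αe| = |(pm 0 2 - αe) + 2 * αe| := by ring_nf
        _ ≤ |pm 0 2 - αe| + |2 * αe| := abs_add_le _ _
        _ = |pm 0 2 - αe| + 2 * A := by rw [abs_mul]; norm_num; exact hAdef.symm
    calc |pm 0 2 - αe| * |pm 0 2 + αe| ≤ |pm 0 2 - αe| * (|pm 0 2 - αe| + 2 * A) :=
          mul_le_mul_of_nonneg_left h2 (abs_nonneg _)
      _ ≤ δ * (δ + 2 * A) :=
          mul_le_mul habsw0.le (by linarith) (by positivity) hδpos.le
  have hQA : ∀ τ : ℝ, |(pm τ 2) ^ 2 - αe ^ 2| ≤ η := by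
    intro τ
    have h1 := hN τ
    have h2 := hP τ
    have h3 := abs_le.mp hz0diff
    rw [abs_le]
    constructor <;>
      linarith [sq_nonneg (pm τ 0), sq_nonneg (pm τ 1), sq_nonneg (pm 0 0),
        sq_nonneg (pm 0 1), sq_nonneg δ, hP0, mul_nonneg hC'pos.le (sq_nonneg δ)]
  -- |z| ≤ A + θ everywhere
  have hzbound : ∀ τ : ℝ, |pm τ 2| ≤ A + θ := by
    intro τ
    have h1 := abs_le.mp (hQA τ)
    have h2 : (pm τ 2) ^ 2 ≤ (A + θ) ^ 2 := by
      have h4 : (A + θ) ^ 2 = A ^ 2 + 2 * (A * θ) + θ ^ 2 := by ring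
      linarith [mul_nonneg hA0 hθ0, hθsq, hA2, h1.2]
    have h3 := Real.sqrt_le_sqrt h2
    rwa [Real.sqrt_sq_eq_abs, Real.sqrt_sq (by positivity)] at h3
  -- the gap lemma
  have key : ∀ τ : ℝ, |pm τ 2 - αe| ≤ θ ∨ 2 * A - θ ≤ |pm τ 2 - αe| := by
    intro τ
    by_contra hcon
    push_neg at hcon
    obtain ⟨h1, h2⟩ := hcon
    have hw : |pm τ 2 - αe| * |pm τ 2 - αe + 2 * αe| ≤ θ ^ 2 := by
      rw [← abs_mul]
      have e : (pm τ 2 - αe) * (pm τ 2 - αe + 2 * αe) = (pm τ 2) ^ 2 - αe ^ 2 := by ring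
      rw [e, hθsq]
      exact hQA τ
    have h3 : 2 * A - |pm τ 2 - αe| ≤ |pm τ 2 - αe + 2 * αe| := by
      have h5 := abs_sub_abs_le_abs_sub (2 * αe) (pm τ 2 - αe + 2 * αe)
      have h6 : 2 * αe - (pm τ 2 - αe + 2 * αe) = -(pm τ 2 - αe) := by ring
      rw [h6, abs_neg] at h5
      have h7 : |2 * αe| = 2 * A := by rw [abs_mul]; norm_num; exact hAdef.symm
      linarith
    have h7 : θ < |pm τ 2 - αe + 2 * αe| := by linarith
    have h8 : θ * θ < |pm τ 2 - αe| * |pm τ 2 - αe + 2 * αe| :=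
      mul_lt_mul'' h1 h7 hθ0 hθ0
    have h9 : θ ^ 2 = θ * θ := sq θ
    linarith
  -- the third coordinate stays near αe
  have hzt : |pm t 2 - αe| ≤ 5 * θ := by
    rcases le_or_gt A (2 * θ) with hA2θ | hA2θ
    · have hb := hzbound t
      have habs : |pm t 2 - αe| ≤ |pm t 2| + A := by
        calc |pm t 2 - αe| = |pm t 2 + -αe| := by ring_nf
          _ ≤ |pm t 2| + |(-αe)| := abs_add_le _ _
          _ = |pm t 2| + A := by rw [abs_neg]
      linarith
    · by_contra hcon
      push_neg at hcon
      have hgt : 2 * A - θ ≤ |pm t 2 - αe| := by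
        rcases key t with h | h
        · linarith
        · exact h
      have hg0 : |pm 0 2 - αe| ≤ θ := le_trans habsw0.le hδθ
      have hmem : A ∈ Set.Icc (|pm 0 2 - αe|) (|pm t 2 - αe|) := by
        constructor <;> [linarith; linarith]
      obtain ⟨τ, hτ, hgτ⟩ := intermediate_value_Icc ht hgc.continuousOn hmem
      have hgτ' : |pm τ 2 - αe| = A := hgτ
      rcases key τ with h | h <;> rw [hgτ'] at h <;> linarith
  -- final estimate
  have hfin : ‖pm t - αe • kvec‖ ^ 2 < ε ^ 2 := by
    rw [enorm t]
    have h1 : (pm t 2 - αe) ^ 2 ≤ 25 * η := by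
      have h2 : (pm t 2 - αe) ^ 2 ≤ (5 * θ) ^ 2 := by
        rw [← sq_abs (pm t 2 - αe)]
        exact pow_le_pow_left₀ (abs_nonneg _) hzt 2
      have h3 : (5 * θ) ^ 2 = 25 * θ ^ 2 := by ring
      linarith [hθsq]
    have h2 := hP t
    have hδ2 : δ ^ 2 ≤ δ := by
      have h4 := mul_le_mul_of_nonneg_left hδ1 hδpos.le
      have h5 : δ ^ 2 = δ * δ := sq δ
      linarith
    have hη : η ≤ 2 * δ + C' * δ + 2 * A * δ := by
      have h6 := mul_le_mul_of_nonneg_left hδ2 hC'pos.le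
      linarith
    have h8 := mul_le_mul_of_nonneg_left hδ2 hC'pos.le
    have hδε' : C' * δ + 25 * (2 * δ + C' * δ + 2 * A * δ) ≤ ε ^ 2 / 2 := by
      calc C' * δ + 25 * (2 * δ + C' * δ + 2 * A * δ)
          = (C' + 25 * (2 + C' + 2 * A)) * δ := by ring
        _ ≤ ε ^ 2 / 2 := hδε
    linarith [pow_pos hε 2]
  exact lt_of_pow_lt_pow_left₀ 2 hε.le hfin
end
end
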